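/- Let U, V ⊆ ℝⁿ be open sets and let Φ : U → V be a bi-Lipschitz bijection. Suppose there exists o ∈ {-1, 1} such that sgn(det DΦ_x) = o for almost every x ∈ U, where DΦ_x denotes the Fréchet derivative of Φ, which exists almost everywhere by Rademacher's theorem. Then for every Lebesgue-integrable function ω : V → ℝ one has ∫_U ω(Φ(x)) · det(DΦ_x) dx = o · ∫_V ω(y) dy. -/

import Mathlib

open Set MeasureTheory Metric
open scoped ENNReal NNReal

noncomputable section

/-- Euclidean `n`-space. -/
abbrev Euc (n : ℕ) : Type := EuclideanSpace ℝ (Fin n)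

/-- `f` is bi-Lipschitz on `s` (i.e. Lipschitz with a Lipschitz inverse on the image). -/
def BiLipschitzOn {α β : Type*} [PseudoMetricSpace α] [PseudoMetricSpace β]
    (f : α → β) (s : Set α) : Prop :=
  ∃ C c : ℝ, 0 < c ∧ ∀ x ∈ s, ∀ y ∈ s,
    c * dist x y ≤ dist (f x) (f y) ∧ dist (f x) (f y) ≤ C * dist x y

/-- `f` is locally Lipschitz (LIP) on `s`: every point of `s` has a relative
neighborhood on which `f` is Lipschitz. -/
def LocLipschitzOn {α β : Type*} [PseudoMetricSpace α] [PseudoMetricSpace β]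
    (f : α → β) (s : Set α) : Prop :=
  ∀ x ∈ s, ∃ t ∈ nhdsWithin x s, ∃ K : ℝ,
    ∀ a ∈ t ∩ s, ∀ b ∈ t ∩ s, dist (f a) (f b) ≤ K * dist a b

/-- `f` is a LIP embedding of `s`: injective, locally Lipschitz, with locally
Lipschitz inverse on the image. -/
def IsLIPEmbeddingOn {α β : Type*} [PseudoMetricSpace α] [PseudoMetricSpace β]
    (f : α → β) (s : Set α) : Prop :=
  Set.InjOn f s ∧ LocLipschitzOn f s ∧
    ∃ g : β → α, (∀ x ∈ s, g (f x) = x) ∧ LocLipschitzOn g (f '' s)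

lemma euc_volume_eq_zero_iff_hausdorff {n : ℕ} (t : Set (Euc n)) :
    volume t = 0 ↔ μH[(n : ℝ)] t = 0 := by
  set e := (MeasurableEquiv.toLp 2 (Fin n → ℝ)).symm with he
  have hn : (0 : ℝ) ≤ n := Nat.cast_nonneg n
  have hlip : LipschitzWith 1 (⇑e) := by
    exact PiLp.lipschitzWith_ofLp 2 _
  obtain ⟨K, hKa⟩ : ∃ K, AntilipschitzWith K (@WithLp.ofLp 2 (Fin n → ℝ)) :=
    ⟨_, PiLp.antilipschitzWith_ofLp 2 _⟩
  have hK : LipschitzWith K (⇑e.symm) := fun a b => by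
    have := hKa (e.symm a) (e.symm b)
    exact this
  have hpi : (μH[(n : ℝ)] : Measure (Fin n → ℝ)) = volume := by
    have := MeasureTheory.hausdorffMeasure_pi_real (ι := Fin n)
    rwa [Fintype.card_fin] at this
  have mp : MeasurePreserving e volume volume := PiLp.volume_preserving_ofLp (Fin n)
  constructor
  · intro ht
    have h1 : volume (⇑e '' t) = 0 := by
      rw [MeasurableEquiv.image_eq_preimage_symm]
      exact (MeasurePreserving.symm _ mp).measure_preimage (NullMeasurableSet.of_null ht) |>.trans ht
    have h2 : μH[(n : ℝ)] (⇑e '' t) = 0 := by rw [hpi]; exact h1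
    have h3 := hK.hausdorffMeasure_image_le hn (⇑e '' t)
    have ht' : ⇑e.symm '' (⇑e '' t) = t := by
      rw [← Set.image_comp]; simp
    rw [ht', h2, mul_zero] at h3
    exact le_antisymm h3 zero_le
  · intro ht
    have h2 : μH[(n : ℝ)] (⇑e '' t) = 0 := by
      have := hlip.hausdorffMeasure_image_le hn t
      rw [ht, mul_zero] at this
      exact le_antisymm this zero_le
    have h1 : volume (⇑e '' t) = 0 := by rw [← hpi]; exact h2
    have : t = ⇑e ⁻¹' (⇑e '' t) := by simp [Set.preimage_image_eq _ e.injective]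
    rw [this]
    exact mp.measure_preimage (NullMeasurableSet.of_null h1) |>.trans h1

lemma lipschitzOnWith_image_null {n : ℕ} {K : ℝ≥0} {f : Euc n → Euc n} {t : Set (Euc n)}
    (hf : LipschitzOnWith K f t) (ht : volume t = 0) : volume (f '' t) = 0 := by
  rw [euc_volume_eq_zero_iff_hausdorff] at ht ⊢
  have h := hf.hausdorffMeasure_image_le (show (0:ℝ) ≤ n from Nat.cast_nonneg n)
  rw [ht, mul_zero] at h
  exact le_antisymm h zero_le

/-- Change of variables for bi-Lipschitz maps: if `Φ : U → V` is
a bi-Lipschitz bijection between open sets whose Jacobian determinant has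
almost everywhere constant sign `o ∈ {±1}`, then
`∫_U ω(Φ(x)) · det DΦ_x dx = o · ∫_V ω(y) dy` for integrable `ω`. -/
theorem biLipschitz_change_of_variables {n : ℕ} (U V : Set (Euc n))
    (hU : IsOpen U) (hV : IsOpen V) (Φ : Euc n → Euc n)
    (hbij : Set.BijOn Φ U V) (hlip : BiLipschitzOn Φ U)
    (o : ℝ) (ho : o = 1 ∨ o = -1)
    (hsgn : ∀ᵐ x ∂(volume.restrict U), DifferentiableAt ℝ Φ x ∧
      Real.sign (LinearMap.det ((fderiv ℝ Φ x : Euc n →ₗ[ℝ] Euc n))) = o)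
    (ω : Euc n → ℝ) (hω : IntegrableOn ω V) :
    ∫ x in U, ω (Φ x) * LinearMap.det ((fderiv ℝ Φ x : Euc n →ₗ[ℝ] Euc n))
      = o * ∫ y in V, ω y := by
  obtain ⟨C, c, hc, hCc⟩ := hlip
  have hΦlip : LipschitzOnWith (Real.toNNReal C) Φ U := by
    refine LipschitzOnWith.of_dist_le_mul fun x hx y hy => (hCc x hx y hy).2.trans ?_
    exact mul_le_mul_of_nonneg_right (Real.le_coe_toNNReal C) dist_nonneg
  set D : Euc n → ℝ := fun x => LinearMap.det ((fderiv ℝ Φ x : Euc n →ₗ[ℝ] Euc n)) with hD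
  set P : Euc n → Prop := fun x => DifferentiableAt ℝ Φ x ∧ Real.sign (D x) = o with hP
  have hN : volume ({x | ¬ P x} ∩ U) = 0 := by
    have h := ae_iff.mp hsgn
    rwa [Measure.restrict_apply' hU.measurableSet] at h
  set N : Set (Euc n) := toMeasurable volume ({x | ¬ P x} ∩ U) with hNdef
  have hNnull : volume N = 0 := by rw [hNdef, measure_toMeasurable]; exact hN
  set s : Set (Euc n) := U \ N with hs
  have hsmeas : MeasurableSet s :=
    hU.measurableSet.diff (measurableSet_toMeasurable _ _)
  have hsub : s ⊆ U := diff_subset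
  have hUs : volume (U \ s) = 0 := by
    refine measure_mono_null (fun x hx => ?_) hNnull
    rcases hx with ⟨hxU, hxs⟩
    by_contra hxN
    exact hxs ⟨hxU, hxN⟩
  have hPs : ∀ x ∈ s, P x := by
    intro x hx
    by_contra h
    exact hx.2 (subset_toMeasurable _ _ ⟨h, hx.1⟩)
  have hderiv : ∀ x ∈ s, HasFDerivWithinAt Φ (fderiv ℝ Φ x) s x :=
    fun x hx => ((hPs x hx).1.hasFDerivAt).hasFDerivWithinAt
  have hinj : Set.InjOn Φ s := hbij.injOn.mono hsub
  have COV := integral_image_eq_integral_abs_det_fderiv_smul volume hsmeas hderiv hinj ω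
  have hsU : s =ᵐ[volume] U := by
    rw [ae_eq_set]
    refine ⟨?_, hUs⟩
    rw [Set.diff_eq_empty.mpr hsub]
    exact measure_empty
  have himgsub : Φ '' s ⊆ V := (Set.image_mono hsub).trans hbij.image_eq.subset
  have himg : Φ '' s =ᵐ[volume] V := by
    rw [ae_eq_set]
    refine ⟨?_, ?_⟩
    · rw [Set.diff_eq_empty.mpr himgsub]
      exact measure_empty
    · refine measure_mono_null (fun y hy => ?_)
        (lipschitzOnWith_image_null (hΦlip.mono diff_subset) hUs)
      obtain ⟨x, hxU, rfl⟩ := hbij.surjOn hy.1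
      exact ⟨x, ⟨hxU, fun hxs => hy.2 ⟨x, hxs, rfl⟩⟩, rfl⟩
  calc ∫ x in U, ω (Φ x) * D x
      = ∫ x in s, ω (Φ x) * D x := setIntegral_congr_set hsU.symm
    _ = ∫ x in s, o * (|(fderiv ℝ Φ x).det| • ω (Φ x)) := by
        refine setIntegral_congr_fun hsmeas (fun x hx => ?_)
        have hsx := (hPs x hx).2
        have hdet : (fderiv ℝ Φ x).det = D x := rfl
        rw [hdet, smul_eq_mul]
        have habs : |D x| = o * D x := by
          rcases ho with rfl | rfl
          · have hpos : 0 < D x := by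
              rcases lt_trichotomy (D x) 0 with h | h | h
              · rw [Real.sign_of_neg h] at hsx; norm_num at hsx
              · rw [h, Real.sign_zero] at hsx; norm_num at hsx
              · exact h
            rw [abs_of_pos hpos, one_mul]
          · have hneg : D x < 0 := by
              rcases lt_trichotomy (D x) 0 with h | h | h
              · exact h
              · rw [h, Real.sign_zero] at hsx; norm_num at hsx
              · rw [Real.sign_of_pos h] at hsx; norm_num at hsx
            rw [abs_of_neg hneg]; ring
        rw [habs]
        rcases ho with rfl | rfl <;> ring
    _ = o * ∫ x in s, |(fderiv ℝ Φ x).det| • ω (Φ x) := integral_const_mul o _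
    _ = o * ∫ x in Φ '' s, ω x := by rw [COV]
    _ = o * ∫ y in V, ω y := by rw [setIntegral_congr_set himg]

end
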